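/- arXiv:2102.13266 — 3 statements merged into one kernel-verified Lean document; each statement's English description precedes it below -/
import Mathlib

section
/- Let H be a real Hilbert space and k : ℝⁿ → H a continuous map. Let T > 0, let γ : [0,T] → ℝⁿ be continuous, and let q > 0. Then there exists a unique element Γ_{γ,q} ∈ H such that ⟪g, Γ_{γ,q}⟫ = (1/Γ(q)) ∫₀ᵀ (T−t)^{q−1} ⟪g, k(γ(t))⟫ dt for every g ∈ H; moreover, for every x ∈ ℝⁿ, ⟪Γ_{γ,q}, k(x)⟫ = (1/Γ(q)) ∫₀ᵀ (T−t)^{q−1} ⟪k(γ(t)), k(x)⟫ dt. -/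
open MeasureTheory

lemma occ_integrable_rpow (T q : ℝ) (hq : 0 < q) :
    IntegrableOn (fun t : ℝ => (T - t) ^ (q - 1)) (Set.Icc 0 T) := by
  have h1 : IntervalIntegrable (fun x : ℝ => x ^ (q - 1)) volume 0 T :=
    intervalIntegral.intervalIntegrable_rpow' (by linarith)
  have h2 : IntervalIntegrable (fun x : ℝ => (T - x) ^ (q - 1)) volume (T - 0) (T - T) :=
    h1.comp_sub_left T
  simp only [sub_zero, sub_self] at h2
  have h3 := h2.symm
  rcases le_or_gt 0 T with hT | hT
  · rw [intervalIntegrable_iff_integrableOn_Icc_of_le hT] at h3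
    exact h3
  · rw [Set.Icc_eq_empty (by linarith)]
    simp [IntegrableOn]

/-- Let `H` be a real Hilbert space and `k : ℝⁿ → H` a continuous map (the
feature map of an RKHS with kernel `K(x,y) = ⟪k y, k x⟫`).  For `T > 0`, `γ : [0,T] → ℝⁿ`
continuous and `q > 0`, there exists a unique `Γγq ∈ H` (the occupation kernel of order `q`
of `γ`) such that `⟪g, Γγq⟫ = (1/Γ(q)) ∫₀ᵀ (T - t)^(q-1) ⟪g, k (γ t)⟫ dt` for all `g ∈ H`;
moreover `⟪Γγq, k x⟫ = (1/Γ(q)) ∫₀ᵀ (T - t)^(q-1) ⟪k (γ t), k x⟫ dt` for every `x ∈ ℝⁿ`. -/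
theorem occupation_kernel_exists_unique
    {n : ℕ} {H : Type*} [NormedAddCommGroup H] [InnerProductSpace ℝ H] [CompleteSpace H]
    (k : EuclideanSpace ℝ (Fin n) → H) (hk : Continuous k)
    (T : ℝ) (hT : 0 < T)
    (γ : ℝ → EuclideanSpace ℝ (Fin n)) (hγ : ContinuousOn γ (Set.Icc 0 T))
    (q : ℝ) (hq : 0 < q) :
    ∃ Γγq : H,
      (∀ g : H, (inner ℝ g Γγq : ℝ) =
        (1 / Real.Gamma q) * ∫ t in Set.Icc 0 T, (T - t) ^ (q - 1) * (inner ℝ g (k (γ t)) : ℝ)) ∧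
      (∀ Γ' : H, (∀ g : H, (inner ℝ g Γ' : ℝ) =
        (1 / Real.Gamma q) * ∫ t in Set.Icc 0 T, (T - t) ^ (q - 1) * (inner ℝ g (k (γ t)) : ℝ)) →
        Γ' = Γγq) ∧
      (∀ x : EuclideanSpace ℝ (Fin n), (inner ℝ Γγq (k x) : ℝ) =
        (1 / Real.Gamma q) * ∫ t in Set.Icc 0 T,
          (T - t) ^ (q - 1) * (inner ℝ (k (γ t)) (k x) : ℝ)) := by
  -- integrability of the vector-valued integrand
  have hφ : IntegrableOn (fun t : ℝ => (T - t) ^ (q - 1)) (Set.Icc 0 T) :=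
    occ_integrable_rpow T q hq
  have hkγ : ContinuousOn (fun t => k (γ t)) (Set.Icc 0 T) := hk.comp_continuousOn hγ
  obtain ⟨C, hC⟩ : ∃ C, ∀ t ∈ Set.Icc (0:ℝ) T, ‖k (γ t)‖ ≤ C :=
    isCompact_Icc.exists_bound_of_continuousOn hkγ
  have hmeas : AEStronglyMeasurable (fun t : ℝ => (T - t) ^ (q - 1) • k (γ t))
      (volume.restrict (Set.Icc 0 T)) := by
    apply AEStronglyMeasurable.smul
    · exact hφ.aestronglyMeasurable
    · exact hkγ.aestronglyMeasurable measurableSet_Icc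
  have hint : IntegrableOn (fun t : ℝ => (T - t) ^ (q - 1) • k (γ t)) (Set.Icc 0 T) := by
    apply Integrable.mono' (hφ.const_mul C) hmeas
    filter_upwards [ae_restrict_mem measurableSet_Icc] with t ht
    rw [norm_smul]
    have h1 : 0 ≤ T - t := by linarith [ht.2]
    have h2 : 0 ≤ (T - t) ^ (q - 1) := Real.rpow_nonneg h1 _
    rw [Real.norm_of_nonneg h2]
    calc (T - t) ^ (q - 1) * ‖k (γ t)‖ ≤ (T - t) ^ (q - 1) * C :=
          mul_le_mul_of_nonneg_left (hC t ht) h2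
      _ = C * (T - t) ^ (q - 1) := mul_comm _ _
  set Γγq : H := (1 / Real.Gamma q) • ∫ t in Set.Icc 0 T, (T - t) ^ (q - 1) • k (γ t) with hΓ
  have key : ∀ g : H, (inner ℝ g Γγq : ℝ) =
      (1 / Real.Gamma q) * ∫ t in Set.Icc 0 T, (T - t) ^ (q - 1) * (inner ℝ g (k (γ t)) : ℝ) := by
    intro g
    rw [hΓ, inner_smul_right]
    congr 1
    rw [← integral_inner hint g]
    apply integral_congr_ae
    filter_upwards with t
    rw [inner_smul_right]
  refine ⟨Γγq, key, ?_, ?_⟩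
  · intro Γ' hΓ'
    apply ext_inner_left ℝ
    intro g
    rw [hΓ' g, key g]
  · intro x
    rw [real_inner_comm, key (k x)]
    congr 1
    apply integral_congr_ae
    filter_upwards with t
    rw [real_inner_comm]
end

section
/- Let H be a real Hilbert space and k : ℝⁿ → H a continuous map. Let f : ℝⁿ → ℝⁿ, let T > 0, and let γ : [0,T] → ℝⁿ be continuously differentiable with γ′(t) = f(γ(t)) for all t ∈ [0,T]. Suppose g, h ∈ H are such that the function x ↦ ⟪g, k(x)⟫ is differentiable on ℝⁿ with ∇_x ⟪g, k(x)⟫ · f(x) = ⟪h, k(x)⟫ for every x ∈ ℝⁿ (i.e., h represents the image of g under the Liouville operator with symbol f). Let Γ_γ ∈ H be the occupation kernel of order 1 of γ, i.e., ⟪u, Γ_γ⟫ = ∫₀ᵀ ⟪u, k(γ(t))⟫ dt for all u ∈ H. Then ⟪h, Γ_γ⟫ = ⟪g, k(γ(T))⟫ − ⟪g, k(γ(0))⟫. -/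
open MeasureTheory

/-- Let `H` be a real Hilbert space and `k : ℝⁿ → H` a continuous map (the
feature map of an RKHS, in which evaluation of `g` at `x` is `⟪g, k x⟫`).  Let
`f : ℝⁿ → ℝⁿ` and let `γ : [0,T] → ℝⁿ` be continuously differentiable with
`γ' t = f (γ t)` on `[0,T]`.  Suppose `g, h ∈ H` are such that `x ↦ ⟪g, k x⟫` has
gradient `grad x` at every `x` and `⟪grad x, f x⟫ = ⟪h, k x⟫` (so `h` represents the
image of `g` under the Liouville operator with symbol `f`).  If `Γγ` is the occupation
kernel of order 1 of `γ`, i.e. `⟪u, Γγ⟫ = ∫₀ᵀ ⟪u, k (γ t)⟫ dt` for all `u ∈ H`, then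
`⟪h, Γγ⟫ = ⟪g, k (γ T)⟫ - ⟪g, k (γ 0)⟫`. -/
theorem liouville_adjoint_occupation_kernel
    {n : ℕ} {H : Type*} [NormedAddCommGroup H] [InnerProductSpace ℝ H] [CompleteSpace H]
    (k : EuclideanSpace ℝ (Fin n) → H) (hk : Continuous k)
    (f : EuclideanSpace ℝ (Fin n) → EuclideanSpace ℝ (Fin n))
    (T : ℝ) (hT : 0 < T)
    (γ : ℝ → EuclideanSpace ℝ (Fin n))
    (hγ : ∀ t ∈ Set.Icc (0 : ℝ) T, HasDerivAt γ (f (γ t)) t)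
    (g h : H) (grad : EuclideanSpace ℝ (Fin n) → EuclideanSpace ℝ (Fin n))
    (hgrad : ∀ x, HasGradientAt (fun y => (inner ℝ g (k y) : ℝ)) (grad x) x)
    (hliou : ∀ x, (inner ℝ (grad x) (f x) : ℝ) = (inner ℝ h (k x) : ℝ))
    (Γγ : H)
    (hΓγ : ∀ u : H, (inner ℝ u Γγ : ℝ) = ∫ t in Set.Icc (0 : ℝ) T, (inner ℝ u (k (γ t)) : ℝ)) :
    (inner ℝ h Γγ : ℝ) = (inner ℝ g (k (γ T)) : ℝ) - (inner ℝ g (k (γ 0)) : ℝ) := by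
  have hcont : ContinuousOn γ (Set.Icc 0 T) := fun t ht => (hγ t ht).continuousAt.continuousWithinAt
  have hderiv : ∀ t ∈ Set.uIcc (0 : ℝ) T,
      HasDerivAt (fun s => (inner ℝ g (k (γ s)) : ℝ)) ((inner ℝ h (k (γ t)) : ℝ)) t := by
    intro t ht
    rw [Set.uIcc_of_le hT.le] at ht
    have := ((hgrad (γ t)).hasFDerivAt.comp_hasDerivAt t (hγ t ht))
    simpa [InnerProductSpace.toDual_apply_apply, hliou, Function.comp_def] using this
  have hint : IntervalIntegrable (fun t => (inner ℝ h (k (γ t)) : ℝ)) volume 0 T := by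
    apply ContinuousOn.intervalIntegrable
    rw [Set.uIcc_of_le hT.le]
    exact (continuous_const.inner hk).comp_continuousOn hcont
  have key := intervalIntegral.integral_eq_sub_of_hasDerivAt hderiv hint
  rw [hΓγ h, MeasureTheory.integral_Icc_eq_integral_Ioc,
    ← intervalIntegral.integral_of_le hT.le, key]
end

section
/- Let H be a real Hilbert space and k : ℝⁿ → H a continuous map. Let q > 0, let T₁, T₂ > 0, and let γ₁ : [0,T₁] → ℝⁿ and γ₂ : [0,T₂] → ℝⁿ be continuous signals with occupation kernels of order q denoted Γ_{γ₁,q} and Γ_{γ₂,q}. Then ⟪Γ_{γ₁,q}, Γ_{γ₂,q}⟫ = (1/Γ(q))² ∫₀^{T₂} ∫₀^{T₁} (T₁−t)^{q−1} (T₂−τ)^{q−1} ⟪k(γ₁(t)), k(γ₂(τ))⟫ dt dτ. -/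
open MeasureTheory

/-- Let `H` be a real Hilbert space and `k : ℝⁿ → H` a continuous map (the
feature map of an RKHS).  For `q > 0`, continuous signals `γ₁ : [0,T₁] → ℝⁿ` and
`γ₂ : [0,T₂] → ℝⁿ` with occupation kernels of order `q` given by
`⟪g, Γᵢ⟫ = (1/Γ(q)) ∫₀^{Tᵢ} (Tᵢ-t)^(q-1) ⟪g, k (γᵢ t)⟫ dt`, the Gram entry is
`⟪Γ₁, Γ₂⟫ = (1/Γ(q))² ∫₀^{T₂} ∫₀^{T₁} (T₁-t)^(q-1) (T₂-τ)^(q-1) ⟪k (γ₁ t), k (γ₂ τ)⟫ dt dτ`. -/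
theorem occupation_kernel_gram_entry
    {n : ℕ} {H : Type*} [NormedAddCommGroup H] [InnerProductSpace ℝ H] [CompleteSpace H]
    (k : EuclideanSpace ℝ (Fin n) → H) (hk : Continuous k)
    (q : ℝ) (hq : 0 < q) (T₁ T₂ : ℝ) (hT₁ : 0 < T₁) (hT₂ : 0 < T₂)
    (γ₁ γ₂ : ℝ → EuclideanSpace ℝ (Fin n))
    (hγ₁ : ContinuousOn γ₁ (Set.Icc 0 T₁)) (hγ₂ : ContinuousOn γ₂ (Set.Icc 0 T₂))
    (Γ₁ Γ₂ : H)
    (hΓ₁ : ∀ g : H, (inner ℝ g Γ₁ : ℝ) =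
      (1 / Real.Gamma q) * ∫ t in Set.Icc 0 T₁, (T₁ - t) ^ (q - 1) * (inner ℝ g (k (γ₁ t)) : ℝ))
    (hΓ₂ : ∀ g : H, (inner ℝ g Γ₂ : ℝ) =
      (1 / Real.Gamma q) * ∫ t in Set.Icc 0 T₂, (T₂ - t) ^ (q - 1) * (inner ℝ g (k (γ₂ t)) : ℝ)) :
    (inner ℝ Γ₁ Γ₂ : ℝ) =
      (1 / Real.Gamma q) ^ 2 * ∫ τ in Set.Icc 0 T₂, ∫ t in Set.Icc 0 T₁,
        (T₁ - t) ^ (q - 1) * (T₂ - τ) ^ (q - 1) * (inner ℝ (k (γ₁ t)) (k (γ₂ τ)) : ℝ) := by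
  have key : ∀ τ : ℝ, (T₂ - τ) ^ (q - 1) * (inner ℝ Γ₁ (k (γ₂ τ)) : ℝ)
      = (1 / Real.Gamma q) * ∫ t in Set.Icc 0 T₁,
          (T₁ - t) ^ (q - 1) * (T₂ - τ) ^ (q - 1) * (inner ℝ (k (γ₁ t)) (k (γ₂ τ)) : ℝ) := by
    intro τ
    have hfun : (fun t => (T₁ - t) ^ (q - 1) * (T₂ - τ) ^ (q - 1) *
          (inner ℝ (k (γ₁ t)) (k (γ₂ τ)) : ℝ))
        = fun t => (T₂ - τ) ^ (q - 1) *
          ((T₁ - t) ^ (q - 1) * (inner ℝ (k (γ₂ τ)) (k (γ₁ t)) : ℝ)) := by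
      funext t
      rw [real_inner_comm]
      ring
    rw [real_inner_comm (k (γ₂ τ)) Γ₁, hΓ₁ (k (γ₂ τ)), mul_left_comm, hfun,
      MeasureTheory.integral_const_mul]
  rw [hΓ₂ Γ₁]
  simp_rw [key]
  rw [MeasureTheory.integral_const_mul]
  ring
end
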